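/- arXiv:1309.4242 — 10 statements merged into one kernel-verified Lean document; each statement's English description precedes it below -/
import Mathlib

section
/- Let ⊕ be an A-operation on ℝ⁺. Then ⊕ is strict (u < v implies u ⊕ w < v ⊕ w for all w ∈ ℝ⁺) if and only if w ⊖̄ v = w ⊖̲ v for all pairs (w,v) in the domain of the upper subtraction ⊖̄. -/
open Filter

theorem stmt_5
    (op : NNReal → NNReal → NNReal)
    (hcont : Continuous fun p : NNReal × NNReal => op p.1 p.2)
    (hassoc : ∀ u v w, op u (op v w) = op (op u v) w)
    (hcomm : ∀ u v, op u v = op v u)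
    (hmono : ∀ u v w : NNReal, u ≤ v → op u w ≤ op v w)
    (hunb : ∀ v : NNReal, Tendsto (fun u => op u v) atTop atTop) :
    (∀ u v w : NNReal, u < v → op u w < op v w) ↔
      (∀ w v ub lb : NNReal, IsGreatest {u : NNReal | op u v ≤ w} ub →
        IsLeast {u : NNReal | w ≤ op u v} lb → ub = lb) := by
  have hcontv : ∀ v : NNReal, Continuous fun u => op u v := fun v =>
    hcont.comp (continuous_id.prodMk continuous_const)
  constructor
  · intro hstrict w v ub lb hub hlb
    have h1 : ub ≤ lb := by
      by_contra h
      push_neg at h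
      have := hstrict lb ub v h
      exact absurd ((hlb.1.trans_lt this).trans_le hub.1) (lt_irrefl w)
    -- IVT gives lb ≤ ub
    have hw : w ∈ Set.Icc (op ub v) (op lb v) := ⟨hub.1, hlb.1⟩
    obtain ⟨u, hu, hfu⟩ := intermediate_value_Icc h1 ((hcontv v).continuousOn) hw
    have h3 : u ≤ ub := hub.2 (by simp [Set.mem_setOf_eq, hfu])
    have h4 : lb ≤ u := hlb.2 (by simp [Set.mem_setOf_eq, hfu])
    exact le_antisymm h1 (h4.trans h3)
  · intro H u v w huv
    by_contra hlt
    have heq : op u w = op v w := le_antisymm (hmono u v w huv.le) (not_lt.mp hlt)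
    set W := op v w with hW
    set S1 : Set NNReal := {x | op x w ≤ W} with hS1
    set S2 : Set NNReal := {x | W ≤ op x w} with hS2
    have hc1 : IsClosed S1 := isClosed_Iic.preimage (hcontv w)
    have hc2 : IsClosed S2 := isClosed_Ici.preimage (hcontv w)
    have hne1 : S1.Nonempty := ⟨v, show op v w ≤ W from le_rfl⟩
    have hne2 : S2.Nonempty := ⟨v, show W ≤ op v w from le_rfl⟩
    have hbdd1 : BddAbove S1 := by
      obtain ⟨N, hN⟩ := (Filter.eventually_atTop).mp ((hunb w).eventually_ge_atTop (W + 1))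
      refine ⟨N, fun x hx => ?_⟩
      by_contra hxN
      push_neg at hxN
      have := hN x hxN.le
      have : W + 1 ≤ W := this.trans hx
      simp at this
    have hgreat : IsGreatest S1 (sSup S1) :=
      ⟨hc1.csSup_mem hne1 hbdd1, fun x hx => le_csSup hbdd1 hx⟩
    have hleast : IsLeast S2 (sInf S2) :=
      ⟨hc2.csInf_mem hne2 (OrderBot.bddBelow _), fun x hx => csInf_le (OrderBot.bddBelow _) hx⟩
    have hkey := H W w (sSup S1) (sInf S2) hgreat hleast
    have h5 : v ≤ sSup S1 := hgreat.2 (show op v w ≤ W from le_rfl)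
    have h6 : sInf S2 ≤ u := hleast.2 (by simp [S2, hS2, ← heq])
    exact absurd (h5.trans (hkey ▸ h6)) huv.not_ge
end

section
/- Let ⊕ be an A-operation on ℝ⁺ and u, v, w ∈ ℝ⁺. If (v,u) is in the domain of ⊖̄ and (w, v ⊖̄ u) is in the domain of ⊖̄, then (w ⊕ u, v) is in the domain of ⊖̄ and (w ⊕ u) ⊖̲ v ≤ w ⊖̄ (v ⊖̄ u) ≤ (w ⊕ u) ⊖̄ v. -/
open Filter

private lemma aux_eq
    (op : NNReal → NNReal → NNReal)
    (hcont : Continuous fun p : NNReal × NNReal => op p.1 p.2)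
    (hmono : ∀ u v w : NNReal, u ≤ v → op u w ≤ op v w)
    (hunb : ∀ v : NNReal, Tendsto (fun u => op u v) atTop atTop)
    (u v d : NNReal)
    (hd : IsGreatest {t : NNReal | op t u ≤ v} d) : op d u = v := by
  obtain ⟨hdmem, hdub⟩ := hd
  have hf : Continuous fun t => op t u :=
    hcont.comp (continuous_id.prodMk continuous_const)
  obtain ⟨T, hT⟩ := (tendsto_atTop.mp (hunb u) v).exists
  rcases le_or_gt T d with h | h
  · exact le_antisymm hdmem (hT.trans (hmono _ _ _ h))
  · obtain ⟨c, hc, hcv⟩ := intermediate_value_Icc h.le hf.continuousOn ⟨hdmem, hT⟩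
    have : c ≤ d := hdub (le_of_eq hcv)
    have : c = d := le_antisymm this hc.1
    rw [← this]; exact hcv

theorem stmt_9
    (op : NNReal → NNReal → NNReal)
    (hcont : Continuous fun p : NNReal × NNReal => op p.1 p.2)
    (hassoc : ∀ u v w, op u (op v w) = op (op u v) w)
    (hcomm : ∀ u v, op u v = op v u)
    (hmono : ∀ u v w : NNReal, u ≤ v → op u w ≤ op v w)
    (hunb : ∀ v : NNReal, Tendsto (fun u => op u v) atTop atTop)
    (u v w d k : NNReal)
    (hd : IsGreatest {t : NNReal | op t u ≤ v} d)
    (hk : IsGreatest {t : NNReal | op t d ≤ w} k) :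
    (∃ u₀, op u₀ v ≤ op w u) ∧
    (∀ lb, IsLeast {t : NNReal | op w u ≤ op t v} lb → lb ≤ k) ∧
    (∀ ub, IsGreatest {t : NNReal | op t v ≤ op w u} ub → k ≤ ub) := by
  have h1 : op d u = v := aux_eq op hcont hmono hunb u v d hd
  have h2 : op k d = w := aux_eq op hcont hmono hunb d w k hk
  have key : op k v = op w u := by
    rw [← h1, ← h2, hassoc]
  refine ⟨⟨k, key.le⟩, ?_, ?_⟩
  · intro lb hlb
    exact hlb.2 key.ge
  · intro ub hub
    exact hub.2 key.le
end

section
/- Let ⊕ be an A-operation on ℝ⁺. For all u, v, w ∈ ℝ⁺: (w ⊕ u) ⊖̲ [(v ⊖̲ u) ⊕ u] ≤ w ⊖̲ (v ⊖̲ u), where ⊖̲ denotes the lower subtraction. -/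
open Filter

theorem stmt_10
    (op : NNReal → NNReal → NNReal)
    (hcont : Continuous fun p : NNReal × NNReal => op p.1 p.2)
    (hassoc : ∀ u v w, op u (op v w) = op (op u v) w)
    (hcomm : ∀ u v, op u v = op v u)
    (hmono : ∀ u v w : NNReal, u ≤ v → op u w ≤ op v w)
    (hunb : ∀ v : NNReal, Tendsto (fun u => op u v) atTop atTop)
    (u v w a b c : NNReal)
    (ha : IsLeast {t : NNReal | v ≤ op t u} a)
    (hb : IsLeast {t : NNReal | w ≤ op t a} b)
    (hc : IsLeast {t : NNReal | op w u ≤ op t (op a u)} c) :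
    c ≤ b := by
  apply hc.2
  show op w u ≤ op b (op a u)
  rw [hassoc]
  exact hmono w (op b a) u hb.1
end

section
/- Let ⊕ be an A-operation on ℝ⁺. If u ∈ ℝ⁺ and (w,v) is in the domain of the upper subtraction ⊖̄, then (u ⊕ w, u ⊕ v) is also in the domain of ⊖̄ and w ⊖̄ v ≤ (u ⊕ w) ⊖̄ (u ⊕ v). If moreover ⊕ is strict, then equality holds: (u ⊕ w) ⊖̄ (u ⊕ v) = w ⊖̄ v. -/
open Filter

theorem stmt_11
    (op : NNReal → NNReal → NNReal)
    (hcont : Continuous fun p : NNReal × NNReal => op p.1 p.2)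
    (hassoc : ∀ u v w, op u (op v w) = op (op u v) w)
    (hcomm : ∀ u v, op u v = op v u)
    (hmono : ∀ u v w : NNReal, u ≤ v → op u w ≤ op v w)
    (hunb : ∀ v : NNReal, Tendsto (fun u => op u v) atTop atTop)
    (u v w d : NNReal)
    (hd : IsGreatest {t : NNReal | op t v ≤ w} d) :
    (∃ u₀, op u₀ (op u v) ≤ op u w) ∧
    (∀ d', IsGreatest {t : NNReal | op t (op u v) ≤ op u w} d' → d ≤ d') ∧
    ((∀ a b c : NNReal, a < b → op a c < op b c) →
      ∀ d', IsGreatest {t : NNReal | op t (op u v) ≤ op u w} d' → d' = d) := by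
  have key : op d (op u v) ≤ op u w := by
    calc op d (op u v) = op u (op d v) := by
          rw [hassoc, hassoc, hcomm d u]
      _ ≤ op u w := by rw [hcomm u (op d v), hcomm u w]; exact hmono _ _ _ hd.1
  refine ⟨⟨d, key⟩, fun d' hd' => hd'.2 key, fun hstrict d' hd' => ?_⟩
  have hle : d ≤ d' := hd'.2 key
  have h1 : op d' v ≤ w := by
    by_contra h
    push_neg at h
    have h2 : op u w < op u (op d' v) := by
      rw [hcomm u w, hcomm u (op d' v)]; exact hstrict _ _ _ h
    have h3 : op d' (op u v) = op u (op d' v) := by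
      rw [hassoc, hassoc, hcomm d' u]
    exact absurd (h3 ▸ hd'.1) (not_le.mpr h2)
  exact le_antisymm (hd.2 h1) hle
end

section
/- Let ⊕ be an A-operation on ℝ⁺. For all u, v, w ∈ ℝ⁺, (u ⊕ w) ⊖̲ (u ⊕ v) ≤ w ⊖̲ v; and if ⊕ is strict, (u ⊕ w) ⊖̲ (u ⊕ v) = w ⊖̲ v (translation invariance of the lower subtraction). -/
open Filter

theorem stmt_12
    (op : NNReal → NNReal → NNReal)
    (hcont : Continuous fun p : NNReal × NNReal => op p.1 p.2)
    (hassoc : ∀ u v w, op u (op v w) = op (op u v) w)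
    (hcomm : ∀ u v, op u v = op v u)
    (hmono : ∀ u v w : NNReal, u ≤ v → op u w ≤ op v w)
    (hunb : ∀ v : NNReal, Tendsto (fun u => op u v) atTop atTop)
    (u v w a b : NNReal)
    (ha : IsLeast {t : NNReal | op u w ≤ op t (op u v)} a)
    (hb : IsLeast {t : NNReal | w ≤ op t v} b) :
    a ≤ b ∧ ((∀ x y z : NNReal, x < y → op x z < op y z) → a = b) := by
  have hab : a ≤ b := by
    apply ha.2
    show op u w ≤ op b (op u v)
    calc op u w = op w u := hcomm _ _
      _ ≤ op (op b v) u := hmono _ _ _ hb.1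
      _ = op b (op v u) := by rw [← hassoc]
      _ = op b (op u v) := by rw [hcomm v u]
  refine ⟨hab, fun hstrict => le_antisymm hab ?_⟩
  apply hb.2
  show w ≤ op a v
  by_contra h
  push_neg at h
  have := hstrict _ _ u h
  have h2 : op u w ≤ op u (op a v) := by
    calc op u w ≤ op a (op u v) := ha.1
      _ = op a (op v u) := by rw [hcomm v u]
      _ = op (op a v) u := hassoc _ _ _
      _ = op u (op a v) := hcomm _ _
  rw [hcomm (op a v) u, hcomm w u] at this
  exact absurd h2 (not_le.2 this)
end

section
/- Let (X,𝒮) be an optimization space, ⊕ a strict A-operation on ℝ⁺, C a cost function, S* an optimal solution of minimizing f_C(S) = ⊕_{y∈S} C(y) over S ∈ 𝒮, and x ∈ S*. Then for every γ ∈ ℝ⁺ with γ ≤ C(x), the solution S* remains optimal for the perturbed problem with cost C_{x,γ}: f(C_{x,γ})(S*) ≤ f(C_{x,γ})(S) for all S ∈ 𝒮. -/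
open Filter

theorem stmt_15 {X : Type*} [Fintype X] [DecidableEq X]
    (hX : 2 ≤ Fintype.card X)
    (𝒮 : Finset (Finset X))
    (hne : ∀ S ∈ 𝒮, S.Nonempty)
    (hcup : ∀ x : X, ∃ S ∈ 𝒮, x ∈ S)
    (hcap : ∀ x : X, ∃ S ∈ 𝒮, x ∉ S)
    (op : NNReal → NNReal → NNReal)
    (hcont : Continuous fun p : NNReal × NNReal => op p.1 p.2)
    (hassoc : ∀ u v w, op u (op v w) = op (op u v) w)
    (hcomm : ∀ u v, op u v = op v u)
    (hmono : ∀ u v w : NNReal, u ≤ v → op u w ≤ op v w)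
    (hunb : ∀ v : NNReal, Tendsto (fun u => op u v) atTop atTop)
    (hstrict : ∀ u v w : NNReal, u < v → op u w < op v w)
    (F : (X → NNReal) → Finset X → NNReal)
    (hFsingle : ∀ (D : X → NNReal) (x : X), F D {x} = D x)
    (hFins : ∀ (D : X → NNReal) (x : X) (S : Finset X), x ∉ S → S.Nonempty →
      F D (insert x S) = op (D x) (F D S))
    (C : X → NNReal)
    (Sstar : Finset X) (hSstar : Sstar ∈ 𝒮)
    (hopt : ∀ S ∈ 𝒮, F C Sstar ≤ F C S)
    (x : X) (hx : x ∈ Sstar)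
    (γ : NNReal) (hγ : γ ≤ C x) :
    ∀ S ∈ 𝒮, F (Function.update C x γ) Sstar ≤ F (Function.update C x γ) S := by
  intro S hS
  set C' : X → NNReal := Function.update C x γ with hC'
  have hC'x : C' x = γ := Function.update_self x γ C
  have hC'ne : ∀ y : X, y ≠ x → C' y = C y := fun y hy =>
    Function.update_of_ne hy γ C
  have hle : ∀ y, C' y ≤ C y := by
    intro y
    by_cases h : y = x
    · subst h; rw [hC'x]; exact hγ
    · rw [hC'ne y h]
  -- op monotone in both arguments
  have hmono2 : ∀ a a' b b' : NNReal, a ≤ a' → b ≤ b' → op a b ≤ op a' b' := by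
    intro a a' b b' h1 h2
    calc op a b ≤ op a' b := hmono _ _ _ h1
      _ = op b a' := hcomm _ _
      _ ≤ op b' a' := hmono _ _ _ h2
      _ = op a' b' := hcomm _ _
  -- cancellation
  have hcancel : ∀ a b w : NNReal, op a w ≤ op b w → a ≤ b := by
    intro a b w h
    by_contra hc
    push_neg at hc
    exact absurd h (not_le.mpr (hstrict _ _ _ hc))
  -- F congruence: only depends on values on the set
  have hFcongr : ∀ (D D' : X → NNReal) (T : Finset X) (hT : T.Nonempty),
      (∀ y ∈ T, D y = D' y) → F D T = F D' T := by
    intro D D' T hT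
    induction hT using Finset.Nonempty.cons_induction with
    | singleton a =>
      intro h
      rw [hFsingle, hFsingle, h a (Finset.mem_singleton_self a)]
    | cons a s ha hs ih =>
      intro h
      rw [Finset.cons_eq_insert, hFins D a s ha hs, hFins D' a s ha hs,
        h a (by simp), ih (fun y hy => h y (by simp [hy]))]
  -- F monotone in cost function
  have hFmono : ∀ (D D' : X → NNReal) (T : Finset X) (hT : T.Nonempty),
      (∀ y, D y ≤ D' y) → F D T ≤ F D' T := by
    intro D D' T hT hDD
    induction hT using Finset.Nonempty.cons_induction with
    | singleton a => rw [hFsingle, hFsingle]; exact hDD a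
    | cons a s ha hs ih =>
      rw [Finset.cons_eq_insert, hFins D a s ha hs, hFins D' a s ha hs]
      exact hmono2 _ _ _ _ (hDD a) ih
  -- splitting off x
  have hsplit : ∀ (D : X → NNReal) (T : Finset X), x ∈ T → (T.erase x).Nonempty →
      F D T = op (D x) (F D (T.erase x)) := by
    intro D T hxT hTe
    conv_lhs => rw [← Finset.insert_erase hxT]
    exact hFins D x (T.erase x) (Finset.notMem_erase x T) hTe
  have hxe : ∀ T : Finset X, x ∉ T.erase x := fun T => Finset.notMem_erase x T
  have hCC' : ∀ T : Finset X, (T.erase x).Nonempty → F C' (T.erase x) = F C (T.erase x) := by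
    intro T hT
    exact hFcongr C' C (T.erase x) hT fun y hy =>
      hC'ne y (Finset.ne_of_mem_erase hy)
  by_cases hxS : x ∈ S
  · by_cases h1 : (Sstar.erase x).Nonempty
    · set A := F C (Sstar.erase x) with hA
      have hFCstar : F C Sstar = op (C x) A := hsplit C Sstar hx h1
      have hFC'star : F C' Sstar = op γ A := by
        rw [hsplit C' Sstar hx h1, hC'x, hCC' Sstar h1]
      by_cases h2 : (S.erase x).Nonempty
      · -- both proper
        set B := F C (S.erase x) with hB
        have hFCS : F C S = op (C x) B := hsplit C S hxS h2
        have hAB : A ≤ B := by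
          apply hcancel A B (C x)
          rw [hcomm A (C x), hcomm B (C x), ← hFCstar, ← hFCS]
          exact hopt S hS
        have hFC'S : F C' S = op γ B := by
          rw [hsplit C' S hxS h2, hC'x, hCC' S h2]
        rw [hFC'star, hFC'S]
        exact hmono2 _ _ _ _ le_rfl hAB
      · -- S = {x}
        have hSsing : S = {x} := by
          rcases (Finset.erase_eq_empty_iff S x).mp
            (Finset.not_nonempty_iff_eq_empty.mp h2) with h | h
          · exact absurd (h ▸ hxS) (Finset.notMem_empty x)
          · exact h
        have hFC'S : F C' S = γ := by rw [hSsing, hFsingle, hC'x]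
        have key : F C Sstar ≤ C x := by
          have := hopt S hS
          rwa [hSsing, hFsingle] at this
        rw [hFC'S, hFC'star]
        apply hcancel (op γ A) γ (C x)
        calc op (op γ A) (C x) = op γ (op A (C x)) := (hassoc γ A (C x)).symm
          _ = op γ (op (C x) A) := by rw [hcomm A (C x)]
          _ = op γ (F C Sstar) := by rw [hFCstar]
          _ ≤ op γ (C x) := hmono2 _ _ _ _ le_rfl key
    · -- Sstar = {x}
      have hstarsing : Sstar = {x} := by
        rcases (Finset.erase_eq_empty_iff Sstar x).mp
          (Finset.not_nonempty_iff_eq_empty.mp h1) with h | h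
        · exact absurd (h ▸ hx) (Finset.notMem_empty x)
        · exact h
      have hFC'star : F C' Sstar = γ := by rw [hstarsing, hFsingle, hC'x]
      by_cases h2 : (S.erase x).Nonempty
      · set B := F C (S.erase x) with hB
        have hFCS : F C S = op (C x) B := hsplit C S hxS h2
        have key : C x ≤ op (C x) B := by
          have := hopt S hS
          rwa [hstarsing, hFsingle, hFCS] at this
        have hFC'S : F C' S = op γ B := by
          rw [hsplit C' S hxS h2, hC'x, hCC' S h2]
        rw [hFC'star, hFC'S]
        apply hcancel γ (op γ B) (C x)
        calc op γ (C x) ≤ op γ (op (C x) B) := hmono2 _ _ _ _ le_rfl key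
          _ = op γ (op B (C x)) := by rw [hcomm (C x) B]
          _ = op (op γ B) (C x) := hassoc γ B (C x)
      · have hSsing : S = {x} := by
          rcases (Finset.erase_eq_empty_iff S x).mp
            (Finset.not_nonempty_iff_eq_empty.mp h2) with h | h
          · exact absurd (h ▸ hxS) (Finset.notMem_empty x)
          · exact h
        rw [hstarsing, hSsing]
  · -- x ∉ S
    calc F C' Sstar ≤ F C Sstar := hFmono C' C Sstar (hne Sstar hSstar) hle
      _ ≤ F C S := hopt S hS
      _ = F C' S := (hFcongr C' C S (hne S hS) fun y hy =>
          hC'ne y (fun h => hxS (h ▸ hy))).symm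
end

section
/- Let (X,𝒮) be an optimization space, ⊕ a strict A-operation with neutral element e, C a cost function, and let S* be optimal for minimizing f_C over 𝒮 with x ∈ S*. Define C⁺_{S*}(x) = f_C(𝒮*₋ₓ) ⊖̄ F_C(S* ∖ {x}), where f_C(𝒮*₋ₓ) = min{f_C(S) : S ∈ 𝒮, x ∉ S}. Then the upper tolerance u_{S*}(x) := C⁺_{S*}(x) ⊖̄ C(x) satisfies u_{S*}(x) = f_C(𝒮*₋ₓ) ⊖̄ f_C(𝒮*) ≥ e, where f_C(𝒮*) = min_{S∈𝒮} f_C(S); moreover u_{S*}(x) = e iff f_C(𝒮*₋ₓ) = f_C(𝒮*). -/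
open Filter

theorem stmt_16 {X : Type*} [Fintype X] [DecidableEq X]
    (hX : 2 ≤ Fintype.card X)
    (𝒮 : Finset (Finset X))
    (hne : ∀ S ∈ 𝒮, S.Nonempty)
    (hcup : ∀ x : X, ∃ S ∈ 𝒮, x ∈ S)
    (hcap : ∀ x : X, ∃ S ∈ 𝒮, x ∉ S)
    (op : NNReal → NNReal → NNReal)
    (hcont : Continuous fun p : NNReal × NNReal => op p.1 p.2)
    (hassoc : ∀ u v w, op u (op v w) = op (op u v) w)
    (hcomm : ∀ u v, op u v = op v u)
    (hmono : ∀ u v w : NNReal, u ≤ v → op u w ≤ op v w)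
    (hunb : ∀ v : NNReal, Tendsto (fun u => op u v) atTop atTop)
    (hstrict : ∀ u v w : NNReal, u < v → op u w < op v w)
    (e : NNReal) (he : ∀ v, op e v = v)
    (F : (X → NNReal) → Finset X → NNReal)
    (hFempty : ∀ D : X → NNReal, F D ∅ = e)
    (hFins : ∀ (D : X → NNReal) (x : X) (S : Finset X), x ∉ S →
      F D (insert x S) = op (D x) (F D S))
    (C : X → NNReal)
    (Sstar : Finset X) (hSstar : Sstar ∈ 𝒮)
    (hopt : ∀ S ∈ 𝒮, F C Sstar ≤ F C S)
    (x : X) (hx : x ∈ Sstar)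
    (mminus : NNReal)
    (hmminus : IsLeast {r : NNReal | ∃ S ∈ 𝒮, x ∉ S ∧ F C S = r} mminus)
    (Cplus : NNReal)
    (hCplus : IsGreatest {u : NNReal | op u (F C (Sstar.erase x)) ≤ mminus} Cplus)
    (utol : NNReal)
    (hutol : IsGreatest {u : NNReal | op u (C x) ≤ Cplus} utol) :
    IsGreatest {u : NNReal | op u (F C Sstar) ≤ mminus} utol ∧
    e ≤ utol ∧
    (utol = e ↔ mminus = F C Sstar) := by
  have hFs : F C Sstar = op (C x) (F C (Sstar.erase x)) := by
    have h := hFins C x (Sstar.erase x) (Finset.notMem_erase x Sstar)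
    rwa [Finset.insert_erase hx] at h
  have hSm : F C Sstar ≤ mminus := by
    obtain ⟨S, hS, hxS, hFS⟩ := hmminus.1
    calc F C Sstar ≤ F C S := hopt S hS
    _ = mminus := hFS
  have hmem : ∀ u, op u (F C Sstar) ≤ mminus ↔ op u (C x) ≤ Cplus := by
    intro u
    constructor
    · intro h
      apply hCplus.2
      show op (op u (C x)) (F C (Sstar.erase x)) ≤ mminus
      rw [← hassoc, ← hFs]; exact h
    · intro h
      rw [hFs, hassoc]
      calc op (op u (C x)) (F C (Sstar.erase x))
          ≤ op Cplus (F C (Sstar.erase x)) := hmono _ _ _ h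
        _ ≤ mminus := hCplus.1
  have hGreat : IsGreatest {u : NNReal | op u (F C Sstar) ≤ mminus} utol := by
    constructor
    · exact (hmem utol).mpr hutol.1
    · intro u hu
      exact hutol.2 ((hmem u).mp hu)
  have heu : e ≤ utol := hGreat.2 (by simp only [Set.mem_setOf_eq, he]; exact hSm)
  refine ⟨hGreat, heu, ?_, ?_⟩
  · intro hue
    by_contra hne'
    have hlt : F C Sstar < mminus := lt_of_le_of_ne hSm (fun h => hne' h.symm)
    have gcont : Continuous fun u : NNReal => op u (F C Sstar) :=
      hcont.comp (continuous_id.prodMk continuous_const)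
    have hev : ∀ᶠ u in nhds e, op u (F C Sstar) < mminus := by
      have h1 : ContinuousAt (fun u : NNReal => op u (F C Sstar)) e := gcont.continuousAt
      have h2 : (fun u : NNReal => op u (F C Sstar)) e < mminus := by
        simpa [he] using hlt
      exact h1.eventually_lt continuousAt_const h2
    have hev2 : ∀ᶠ u in nhdsWithin e (Set.Ioi e),
        op u (F C Sstar) < mminus ∧ u ∈ Set.Ioi e :=
      (hev.filter_mono nhdsWithin_le_nhds).and self_mem_nhdsWithin
    obtain ⟨u, hu1, hu2⟩ := hev2.exists
    have : u ≤ utol := hGreat.2 (le_of_lt hu1)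
    rw [hue] at this
    exact absurd this (not_le.mpr hu2)
  · intro h
    refine le_antisymm ?_ heu
    by_contra hlt
    push_neg at hlt
    have := hstrict e utol (F C Sstar) hlt
    rw [he] at this
    have h2 : op utol (F C Sstar) ≤ F C Sstar := by
      have := hGreat.1
      rwa [h] at this
    exact absurd (lt_of_lt_of_le this h2) (lt_irrefl _)
end

section
/- Let ⊕ be a strict A-operation on ℝ⁺, and consider the optimization problem f_C(S) = ⊕_{y∈S} C(y) → min over a set of trajectories 𝒮 on a finite ground set X. Let S₁*, S₂* be two optimal solutions and x ∈ S₁* ∖ S₂*. Then the upper tolerance of x with respect to S₁* equals the neutral element e: u_{S₁*}(x) = f_C(𝒮*₋ₓ) ⊖̄ f_C(𝒮*) = e, where f_C(𝒮*₋ₓ) = min{f_C(S) : x ∉ S ∈ 𝒮} and f_C(𝒮*) is the optimal value. -/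
open Filter

theorem stmt_17 {X : Type*} [Fintype X] [DecidableEq X]
    (hX : 2 ≤ Fintype.card X)
    (𝒮 : Finset (Finset X))
    (hne : ∀ S ∈ 𝒮, S.Nonempty)
    (hcup : ∀ x : X, ∃ S ∈ 𝒮, x ∈ S)
    (hcap : ∀ x : X, ∃ S ∈ 𝒮, x ∉ S)
    (op : NNReal → NNReal → NNReal)
    (hcont : Continuous fun p : NNReal × NNReal => op p.1 p.2)
    (hassoc : ∀ u v w, op u (op v w) = op (op u v) w)
    (hcomm : ∀ u v, op u v = op v u)
    (hmono : ∀ u v w : NNReal, u ≤ v → op u w ≤ op v w)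
    (hunb : ∀ v : NNReal, Tendsto (fun u => op u v) atTop atTop)
    (hstrict : ∀ u v w : NNReal, u < v → op u w < op v w)
    (e : NNReal) (he : ∀ v, op e v = v)
    (F : (X → NNReal) → Finset X → NNReal)
    (hFempty : ∀ D : X → NNReal, F D ∅ = e)
    (hFins : ∀ (D : X → NNReal) (x : X) (S : Finset X), x ∉ S →
      F D (insert x S) = op (D x) (F D S))
    (C : X → NNReal)
    (S₁ S₂ : Finset X) (hS₁ : S₁ ∈ 𝒮) (hS₂ : S₂ ∈ 𝒮)
    (hopt₁ : ∀ S ∈ 𝒮, F C S₁ ≤ F C S)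
    (hopt₂ : ∀ S ∈ 𝒮, F C S₂ ≤ F C S)
    (x : X) (hx₁ : x ∈ S₁) (hx₂ : x ∉ S₂)
    (mminus : NNReal)
    (hmminus : IsLeast {r : NNReal | ∃ S ∈ 𝒮, x ∉ S ∧ F C S = r} mminus) :
    IsGreatest {u : NNReal | op u (F C S₁) ≤ mminus} e := by
  obtain ⟨⟨S, hS, hxS, hFS⟩, hlb⟩ := hmminus
  have h1 : mminus ≤ F C S₂ := hlb ⟨S₂, hS₂, hx₂, rfl⟩
  have h2 : F C S₁ ≤ mminus := hFS ▸ hopt₁ S hS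
  have h12 : F C S₁ = F C S₂ := le_antisymm (hopt₁ S₂ hS₂) (hopt₂ S₁ hS₁)
  have hM : mminus = F C S₁ := le_antisymm (h12 ▸ h1) h2
  constructor
  · show op e (F C S₁) ≤ mminus
    rw [he, hM]
  · intro u hu
    by_contra h
    push_neg at h
    have := hstrict e u (F C S₁) h
    rw [he] at this
    exact absurd hu (by rw [hM]; exact not_le.mpr this)
end

section
/- Consider the minimization of f_C(S) = Σ_{y∈S} C(y) over trajectories S ∈ 𝒮 on a finite ground set X, with C : X → [0,∞), and let S* be an optimal solution and x ∈ S*. Then the upper tolerance of x equals u_{S*}(x) = min{f_C(S) : S ∈ 𝒮, x ∉ S} − min{f_C(S) : S ∈ 𝒮} (Libura's formula), and for every γ ∈ [C(x), C(x) + u_{S*}(x)], S* remains optimal when the cost of x is changed to γ. -/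
theorem stmt_18 {X : Type*} [Fintype X] [DecidableEq X]
    (hX : 2 ≤ Fintype.card X)
    (𝒮 : Finset (Finset X))
    (hne : ∀ S ∈ 𝒮, S.Nonempty)
    (hcup : ∀ x : X, ∃ S ∈ 𝒮, x ∈ S)
    (hcap : ∀ x : X, ∃ S ∈ 𝒮, x ∉ S)
    (C : X → NNReal)
    (Sstar : Finset X) (hSstar : Sstar ∈ 𝒮)
    (hopt : ∀ S ∈ 𝒮, ∑ y ∈ Sstar, C y ≤ ∑ y ∈ S, C y)
    (x : X) (hx : x ∈ Sstar)
    (mminus : NNReal)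
    (hmminus : IsLeast {r : NNReal | ∃ S ∈ 𝒮, x ∉ S ∧ ∑ y ∈ S, C y = r} mminus) :
    IsGreatest {δ : NNReal | ∀ S ∈ 𝒮,
        ∑ y ∈ Sstar, Function.update C x (C x + δ) y ≤
          ∑ y ∈ S, Function.update C x (C x + δ) y}
      (mminus - ∑ y ∈ Sstar, C y) ∧
    (∀ γ : NNReal, C x ≤ γ → γ ≤ C x + (mminus - ∑ y ∈ Sstar, C y) →
      ∀ S ∈ 𝒮, ∑ y ∈ Sstar, Function.update C x γ y ≤
        ∑ y ∈ S, Function.update C x γ y) := by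
  obtain ⟨hm1, hm2⟩ := hmminus
  obtain ⟨S0, hS0, hxS0, hsum0⟩ := hm1
  set m : NNReal := ∑ y ∈ Sstar, C y with hm
  have hstar_le : m ≤ mminus := hsum0 ▸ hopt S0 hS0
  have key : ∀ (v : NNReal) (S : Finset X), x ∈ S →
      ∑ y ∈ S, Function.update C x v y = v + ∑ y ∈ S \ {x}, C y := by
    intro v S hxS
    rw [Finset.sum_update_of_mem hxS]
  have key2 : ∀ (v : NNReal) (S : Finset X), x ∉ S →
      ∑ y ∈ S, Function.update C x v y = ∑ y ∈ S, C y := by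
    intro v S hxS
    refine Finset.sum_congr rfl fun y hy => ?_
    exact Function.update_of_ne (by rintro rfl; exact hxS hy) _ _
  have hmsplit : m = C x + ∑ y ∈ Sstar \ {x}, C y := by
    have := key (C x) Sstar hx
    rw [← this, hm]
    refine Finset.sum_congr rfl fun y _ => ?_
    by_cases hyx : y = x
    · subst hyx; simp
    · rw [Function.update_of_ne hyx]
  -- main bound: for any γ ≤ C x + (mminus - m), optimality holds
  have main : ∀ γ : NNReal, γ ≤ C x + (mminus - m) →
      ∀ S ∈ 𝒮, ∑ y ∈ Sstar, Function.update C x γ y ≤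
        ∑ y ∈ S, Function.update C x γ y := by
    intro γ hγ S hS
    by_cases hxS : x ∈ S
    · rw [key γ Sstar hx, key γ S hxS]
      have hSsplit : ∑ y ∈ S, C y = C x + ∑ y ∈ S \ {x}, C y := by
        have := key (C x) S hxS
        rw [← this]
        refine Finset.sum_congr rfl fun y _ => ?_
        by_cases hyx : y = x
        · subst hyx; simp
        · rw [Function.update_of_ne hyx]
      have h1 : m ≤ ∑ y ∈ S, C y := hopt S hS
      rw [hmsplit, hSsplit] at h1
      exact add_le_add_right (le_of_add_le_add_left h1) γ
    · rw [key γ Sstar hx, key2 γ S hxS]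
      have h2 : mminus ≤ ∑ y ∈ S, C y := hm2 ⟨S, hS, hxS, rfl⟩
      calc γ + ∑ y ∈ Sstar \ {x}, C y
          ≤ (C x + (mminus - m)) + ∑ y ∈ Sstar \ {x}, C y :=
            add_le_add_left hγ _
        _ = (mminus - m) + m := by rw [hmsplit]; ring
        _ = mminus := by rw [add_comm]; exact add_tsub_cancel_of_le hstar_le
        _ ≤ ∑ y ∈ S, C y := h2
  constructor
  · constructor
    · intro S hS
      exact main _ le_rfl S hS
    · intro δ hδ
      have := hδ S0 hS0
      rw [key (C x + δ) Sstar hx, key2 (C x + δ) S0 hxS0, hsum0] at this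
      have : δ + m ≤ mminus := by
        rw [hmsplit]
        calc δ + (C x + ∑ y ∈ Sstar \ {x}, C y)
            = C x + δ + ∑ y ∈ Sstar \ {x}, C y := by ring
          _ ≤ mminus := this
      exact le_tsub_of_add_le_right this
  · intro γ _ hγ2 S hS
    exact main γ hγ2 S hS
end

section
/- Let ⊕ be a strict A-operation on ℝ⁺ with neutral element e, assume C(x) > 0 (resp. C(x) ≥ e in the multiplicative case) for all x ∈ X, and let T_C be the tolerance function of the problem f_C(S) = ⊕_{y∈S}C(y) → min over 𝒮. Then the optimal solution is unique (|𝒮*| = 1) if and only if T_C(x) ≠ e for all x ∈ X. -/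
open Filter Topology

theorem stmt_19 {X : Type*} [Fintype X] [DecidableEq X]
    (hX : 2 ≤ Fintype.card X)
    (𝒮 : Finset (Finset X))
    (hne : ∀ S ∈ 𝒮, S.Nonempty)
    (hcup : ∀ x : X, ∃ S ∈ 𝒮, x ∈ S)
    (hcap : ∀ x : X, ∃ S ∈ 𝒮, x ∉ S)
    (op : NNReal → NNReal → NNReal)
    (hcont : Continuous fun p : NNReal × NNReal => op p.1 p.2)
    (hassoc : ∀ u v w, op u (op v w) = op (op u v) w)
    (hcomm : ∀ u v, op u v = op v u)
    (hmono : ∀ u v w : NNReal, u ≤ v → op u w ≤ op v w)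
    (hunb : ∀ v : NNReal, Tendsto (fun u => op u v) atTop atTop)
    (hstrict : ∀ u v w : NNReal, u < v → op u w < op v w)
    (e : NNReal) (he : ∀ v, op e v = v)
    (F : (X → NNReal) → Finset X → NNReal)
    (hFempty : ∀ D : X → NNReal, F D ∅ = e)
    (hFins : ∀ (D : X → NNReal) (x : X) (S : Finset X), x ∉ S →
      F D (insert x S) = op (D x) (F D S))
    (C : X → NNReal)
    (hCe : ∀ x, e ≤ C x) (hCpos : e = 0 → ∀ x, 0 < C x)
    (Sstar : Finset X) (hSstar : Sstar ∈ 𝒮)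
    (hopt : ∀ S ∈ 𝒮, F C Sstar ≤ F C S)
    (utol : X → NNReal)
    (hutol : ∀ x ∈ Sstar, ∀ mminus : NNReal,
      IsLeast {r : NNReal | ∃ S ∈ 𝒮, x ∉ S ∧ F C S = r} mminus →
      IsGreatest {u : NNReal | op u (F C Sstar) ≤ mminus} (utol x))
    (ltol : X → NNReal)
    (hltol : ∀ x ∉ Sstar, ∀ mx Cminus : NNReal,
      IsLeast {r : NNReal | ∃ S ∈ 𝒮, x ∈ S ∧ F C S = r} mx →
      IsLeast {u : NNReal | op (C x) (F C Sstar) ≤ op u mx} Cminus →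
      IsGreatest {u : NNReal | op u Cminus ≤ C x} (ltol x)) :
    (∀ S ∈ 𝒮, (∀ S' ∈ 𝒮, F C S ≤ F C S') → S = Sstar) ↔
      (∀ x : X, (x ∈ Sstar → utol x ≠ e) ∧ (x ∉ Sstar → ltol x ≠ e)) := by
  classical
  set m := F C Sstar with hm
  -- cancellation from strictness
  have cancel : ∀ u v w : NNReal, op u w ≤ op v w → u ≤ v := by
    intro u v w h
    by_contra hlt
    push_neg at hlt
    exact absurd h (not_le.mpr (hstrict v u w hlt))
  have hCx0 : ∀ x, 0 < C x := by
    intro x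
    rcases eq_or_lt_of_le (show (0:NNReal) ≤ e from zero_le) with h0 | h0
    · exact hCpos h0.symm x
    · exact lt_of_lt_of_le h0 (hCe x)
  have contL : ∀ c : NNReal, Continuous fun u => op u c := fun c =>
    hcont.comp (continuous_id.prodMk continuous_const)
  -- bump up: if c < b then some u > e has op u c ≤ b
  have bump : ∀ c b : NNReal, c < b → ∃ u, e < u ∧ op u c ≤ b := by
    intro c b hlt
    have hopen : IsOpen {u : NNReal | op u c < b} := isOpen_lt (contL c) continuous_const
    have hmem : {u : NNReal | op u c < b} ∈ 𝓝[>] e :=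
      mem_nhdsWithin_of_mem_nhds (hopen.mem_nhds (by simpa [he] using hlt))
    obtain ⟨u, hu1, hu2⟩ :=
      (nhdsGT_neBot e).nonempty_of_mem
        (Filter.inter_mem hmem self_mem_nhdsWithin)
    exact ⟨u, hu2, le_of_lt hu1⟩
  -- bump down: if K < op c₀ c with c₀ > 0 then some u < c₀ has K ≤ op u c
  have bumpdown : ∀ c₀ c K : NNReal, 0 < c₀ → K < op c₀ c → ∃ u, u < c₀ ∧ K ≤ op u c := by
    intro c₀ c K hc₀ hlt
    have hopen : IsOpen {u : NNReal | K < op u c} := isOpen_lt continuous_const (contL c)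
    have hne' : (Set.Iio c₀).Nonempty := ⟨0, hc₀⟩
    haveI : (𝓝[<] c₀).NeBot := nhdsWithin_Iio_self_neBot' hne'
    have hmem : {u : NNReal | K < op u c} ∈ 𝓝[<] c₀ :=
      mem_nhdsWithin_of_mem_nhds (hopen.mem_nhds hlt)
    obtain ⟨u, hu1, hu2⟩ :=
      (this).nonempty_of_mem (Filter.inter_mem hmem self_mem_nhdsWithin)
    exact ⟨u, hu2, le_of_lt hu1⟩
  constructor
  · -- uniqueness → tolerances ≠ e
    intro huniq x
    constructor
    · intro hx heq
      -- construct the least value mminus over S with x ∉ S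
      obtain ⟨S0, hS0, hxS0⟩ := hcap x
      set V : Finset NNReal := (𝒮.filter (fun S => x ∉ S)).image (F C) with hV
      have hVne : V.Nonempty :=
        ⟨F C S0, Finset.mem_image.mpr ⟨S0, Finset.mem_filter.mpr ⟨hS0, hxS0⟩, rfl⟩⟩
      set mm := V.min' hVne with hmm
      have hleast : IsLeast {r : NNReal | ∃ S ∈ 𝒮, x ∉ S ∧ F C S = r} mm := by
        constructor
        · obtain ⟨S, hS, hFS⟩ := Finset.mem_image.mp (V.min'_mem hVne)
          obtain ⟨hS1, hS2⟩ := Finset.mem_filter.mp hS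
          exact ⟨S, hS1, hS2, hFS⟩
        · rintro r ⟨S, hS, hxS, rfl⟩
          exact V.min'_le _ (Finset.mem_image.mpr ⟨S, Finset.mem_filter.mpr ⟨hS, hxS⟩, rfl⟩)
      have hG := hutol x hx mm hleast
      have hmle : m ≤ mm := by
        obtain ⟨S, hS, hxS, hFS⟩ := hleast.1
        exact hFS ▸ hopt S hS
      have hmmeq : mm = m := by
        rcases eq_or_lt_of_le hmle with h | h
        · exact h.symm
        · obtain ⟨u, hu1, hu2⟩ := bump m mm h
          exact absurd (hG.2 hu2) (not_le.mpr (heq ▸ hu1))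
      obtain ⟨S, hS, hxS, hFS⟩ := hleast.1
      have hSopt : ∀ S' ∈ 𝒮, F C S ≤ F C S' := by
        intro S' hS'
        rw [hFS, hmmeq]
        exact hopt S' hS'
      exact hxS ((huniq S hS hSopt) ▸ hx)
    · intro hx heq
      obtain ⟨S0, hS0, hxS0⟩ := hcup x
      set V : Finset NNReal := (𝒮.filter (fun S => x ∈ S)).image (F C) with hV
      have hVne : V.Nonempty :=
        ⟨F C S0, Finset.mem_image.mpr ⟨S0, Finset.mem_filter.mpr ⟨hS0, hxS0⟩, rfl⟩⟩
      set mx := V.min' hVne with hmx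
      have hleastmx : IsLeast {r : NNReal | ∃ S ∈ 𝒮, x ∈ S ∧ F C S = r} mx := by
        constructor
        · obtain ⟨S, hS, hFS⟩ := Finset.mem_image.mp (V.min'_mem hVne)
          obtain ⟨hS1, hS2⟩ := Finset.mem_filter.mp hS
          exact ⟨S, hS1, hS2, hFS⟩
        · rintro r ⟨S, hS, hxS, rfl⟩
          exact V.min'_le _ (Finset.mem_image.mpr ⟨S, Finset.mem_filter.mpr ⟨hS, hxS⟩, rfl⟩)
      have hmxge : m ≤ mx := by
        obtain ⟨S, hS, hxS, hFS⟩ := hleastmx.1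
        exact hFS ▸ hopt S hS
      -- least element of the closed set A
      set A : Set NNReal := {u | op (C x) m ≤ op u mx} with hA
      have hAclosed : IsClosed A := isClosed_le continuous_const (contL mx)
      have hAne : A.Nonempty := by
        obtain ⟨u, hu⟩ := ((hunb mx).eventually (eventually_ge_atTop (op (C x) m))).exists
        exact ⟨u, hu⟩
      have hAbdd : BddBelow A := OrderBot.bddBelow A
      have hcmLeast : IsLeast A (sInf A) :=
        ⟨hAclosed.csInf_mem hAne hAbdd, fun a ha => csInf_le hAbdd ha⟩
      have hG := hltol x hx mx (sInf A) hleastmx hcmLeast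
      -- from ltol x = e deduce sInf A = C x
      have hcmle : sInf A ≤ C x := by
        have := hG.1
        rw [heq] at this
        simpa [he] using this
      have hcmeq : sInf A = C x := by
        rcases eq_or_lt_of_le hcmle with h | h
        · exact h
        · obtain ⟨u, hu1, hu2⟩ := bump (sInf A) (C x) h
          exact absurd (hG.2 hu2) (not_le.mpr (heq ▸ hu1))
      -- deduce mx = m
      have hmxeq : mx = m := by
        rcases eq_or_lt_of_le hmxge with h | h
        · exact h.symm
        · have hlt2 : op (C x) m < op (C x) mx := by
            rw [hcomm (C x) m, hcomm (C x) mx]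
            exact hstrict m mx (C x) h
          obtain ⟨u, hu1, hu2⟩ := bumpdown (C x) mx (op (C x) m) (hCx0 x) hlt2
          have : C x ≤ u := hcmeq ▸ hcmLeast.2 hu2
          exact absurd hu1 (not_lt.mpr this)
      obtain ⟨S, hS, hxS, hFS⟩ := hleastmx.1
      have hSopt : ∀ S' ∈ 𝒮, F C S ≤ F C S' := by
        intro S' hS'
        rw [hFS, hmxeq]
        exact hopt S' hS'
      exact hx ((huniq S hS hSopt) ▸ hxS)
  · -- tolerances ≠ e → uniqueness
    intro htol S hS hSopt
    by_contra hneq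
    have hFS : F C S = m := le_antisymm (hSopt Sstar hSstar) (hopt S hS)
    have hex : ∃ x, (x ∈ Sstar ∧ x ∉ S) ∨ (x ∈ S ∧ x ∉ Sstar) := by
      by_contra h
      push_neg at h
      exact hneq (Finset.ext fun y => ⟨fun hy => (h y).2 hy, fun hy => (h y).1 hy⟩)
    obtain ⟨x, hx | hx⟩ := hex
    · -- x ∈ Sstar \ S : utol x = e
      have hleast : IsLeast {r : NNReal | ∃ S' ∈ 𝒮, x ∉ S' ∧ F C S' = r} m := by
        constructor
        · exact ⟨S, hS, hx.2, hFS⟩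
        · rintro r ⟨S', hS', _, rfl⟩
          exact hopt S' hS'
      have hG := hutol x hx.1 m hleast
      have hGe : IsGreatest {u : NNReal | op u m ≤ m} e :=
        ⟨by simp [he], fun u hu => cancel u e m (by rw [he]; exact hu)⟩
      exact (htol x).1 hx.1 (hG.unique hGe)
    · -- x ∈ S \ Sstar : ltol x = e
      have hleastmx : IsLeast {r : NNReal | ∃ S' ∈ 𝒮, x ∈ S' ∧ F C S' = r} m := by
        constructor
        · exact ⟨S, hS, hx.1, hFS⟩
        · rintro r ⟨S', hS', _, rfl⟩
          exact hopt S' hS'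
      have hcm : IsLeast {u : NNReal | op (C x) m ≤ op u m} (C x) :=
        ⟨show op (C x) m ≤ op (C x) m from le_refl _, fun u hu => cancel (C x) u m hu⟩
      have hG := hltol x hx.2 m (C x) hleastmx hcm
      have hGe : IsGreatest {u : NNReal | op u (C x) ≤ C x} e :=
        ⟨by simp [he], fun u hu => cancel u e (C x) (by rw [he]; exact hu)⟩
      exact (htol x).2 hx.2 (hG.unique hGe)
end
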